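/- arXiv:2508.13959 — 6 statements merged into one kernel-verified Lean document; each statement's English description precedes it below -/
import Mathlib

section
/- Let d, ℓ ≥ 1, let {M_x}_{x∈𝒳} be a POVM on ℂ^d with finite outcome set 𝒳 and Tr[M_x] > 0 for every x ∈ 𝒳, let V_1, …, V_ℓ be Hermitian d×d complex matrices orthonormal for the trace inner product (Tr[V_i V_j] = 1 if i = j and 0 otherwise), let ε > 0, and for each sign vector z ∈ {−1,1}^ℓ let a_z ∈ [0,1] and σ_z = I/d + a_z·(ε/√(d·ℓ))·Σ_{i=1}^ℓ z_i V_i. Set T = Σ_{x∈𝒳} Tr[M_x²]/Tr[M_x]. Then the average over uniformly random z ∈ {−1,1}^ℓ of the total variation distance (1/2)·Σ_{x∈𝒳} |Tr[M_x σ_z] − Tr[M_x]/d| is at most ε·√(T/(2ℓ)). -/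
open Matrix
open scoped BigOperators ComplexOrder

lemma sign_ortho {ℓ : ℕ} (i j : Fin ℓ) :
    ∑ z : Fin ℓ → Bool, (if z i then (1:ℝ) else -1) * (if z j then (1:ℝ) else -1)
      = if i = j then (2:ℝ)^ℓ else 0 := by
  rcases eq_or_ne i j with rfl | hij
  · simp only [if_pos rfl]
    have : ∀ z : Fin ℓ → Bool, (if z i then (1:ℝ) else -1) * (if z i then (1:ℝ) else -1) = 1 := by
      intro z; cases z i <;> simp
    simp [this, Finset.card_univ]
  · rw [if_neg hij]
    refine Finset.sum_ninvolution (fun z => Function.update z i (!z i)) ?_ ?_ (fun _ => Finset.mem_univ _) ?_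
    · intro z
      have h1 : Function.update z i (!z i) i = !z i := by simp
      have h2 : Function.update z i (!z i) j = z j := Function.update_of_ne (Ne.symm hij) _ _
      simp only [h1, h2]
      cases z i <;> cases z j <;> norm_num
    · intro z _ hcon
      have := congrFun hcon i
      simp at this
    · intro z
      funext k
      rcases eq_or_ne k i with rfl | hk
      · simp
      · simp [Function.update_of_ne hk]

lemma sq_sum_signs {ℓ : ℕ} (t : Fin ℓ → ℝ) :
    ∑ z : Fin ℓ → Bool, (∑ i, (if z i then (1:ℝ) else -1) * t i)^2
      = 2^ℓ * ∑ i, t i ^ 2 := by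
  have expand : ∀ z : Fin ℓ → Bool, (∑ i, (if z i then (1:ℝ) else -1) * t i)^2
      = ∑ i, ∑ j, ((if z i then (1:ℝ) else -1) * (if z j then (1:ℝ) else -1)) * (t i * t j) := by
    intro z
    rw [sq, Finset.sum_mul_sum]
    apply Finset.sum_congr rfl; intro i _; apply Finset.sum_congr rfl; intro j _; ring
  simp_rw [expand]
  rw [Finset.sum_comm]
  have : ∀ i : Fin ℓ, ∑ z : Fin ℓ → Bool, ∑ j, ((if z i then (1:ℝ) else -1) * (if z j then (1:ℝ) else -1)) * (t i * t j)
      = 2^ℓ * t i ^ 2 := by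
    intro i
    rw [Finset.sum_comm]
    have : ∀ j : Fin ℓ, ∑ z : Fin ℓ → Bool, ((if z i then (1:ℝ) else -1) * (if z j then (1:ℝ) else -1)) * (t i * t j)
        = (if i = j then (2:ℝ)^ℓ else 0) * (t i * t j) := by
      intro j; rw [← Finset.sum_mul, sign_ortho]
    simp_rw [this]
    simp [sq]
  simp_rw [this]
  rw [Finset.mul_sum]

lemma trace_mul_conjTranspose_re_nonneg {d : ℕ} (A : Matrix (Fin d) (Fin d) ℂ) :
    0 ≤ ((A * Aᴴ).trace).re := by
  have h : (A * Aᴴ).trace = ∑ i, ∑ j, A i j * star (A i j) := by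
    simp [Matrix.trace, Matrix.mul_apply, Matrix.diag, Matrix.conjTranspose_apply]
  rw [h]
  rw [Complex.re_sum]
  apply Finset.sum_nonneg
  intro i _
  rw [Complex.re_sum]
  apply Finset.sum_nonneg
  intro j _
  rw [show star (A i j) = starRingEnd ℂ (A i j) from rfl, Complex.mul_conj, Complex.ofReal_re]
  exact Complex.normSq_nonneg _

lemma bessel {d ℓ : ℕ} (N : Matrix (Fin d) (Fin d) ℂ) (hN : N.IsHermitian)
    (V : Fin ℓ → Matrix (Fin d) (Fin d) ℂ)
    (hVherm : ∀ i, (V i).IsHermitian)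
    (hVortho : ∀ i j, ((V i) * (V j)).trace = if i = j then 1 else 0) :
    ∑ i, (((N * V i).trace).re)^2 ≤ ((N * N).trace).re := by
  set t : Fin ℓ → ℝ := fun i => ((N * V i).trace).re with ht
  set S : Matrix (Fin d) (Fin d) ℂ := ∑ i, ((t i : ℝ) : ℂ) • V i with hS
  set R := N - S with hR
  have hSH : Sᴴ = S := by
    rw [hS, Matrix.conjTranspose_sum]
    apply Finset.sum_congr rfl
    intro i _
    rw [Matrix.conjTranspose_smul, (hVherm i).eq]
    simp
  have hRH : Rᴴ = R := by rw [hR, Matrix.conjTranspose_sub, hN.eq, hSH]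
  have h0 : 0 ≤ ((R * Rᴴ).trace).re := trace_mul_conjTranspose_re_nonneg R
  rw [hRH] at h0
  have hNS : (N * S).trace = ∑ i, ((t i : ℝ) : ℂ) * (N * V i).trace := by
    rw [hS, Matrix.mul_sum, Matrix.trace_sum]
    apply Finset.sum_congr rfl
    intro i _
    rw [Matrix.mul_smul, Matrix.trace_smul, smul_eq_mul]
  have hSN : (S * N).trace = ∑ i, ((t i : ℝ) : ℂ) * (N * V i).trace := by
    rw [hS, Matrix.sum_mul, Matrix.trace_sum]
    apply Finset.sum_congr rfl
    intro i _
    rw [Matrix.smul_mul, Matrix.trace_smul, smul_eq_mul, Matrix.trace_mul_comm]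
  have hSS : (S * S).trace = ∑ i, (((t i)^2 : ℝ) : ℂ) := by
    rw [hS, Matrix.sum_mul, Matrix.trace_sum]
    apply Finset.sum_congr rfl
    intro i _
    rw [Matrix.mul_sum]
    simp_rw [Matrix.smul_mul, Matrix.mul_smul]
    rw [Matrix.trace_sum]
    simp_rw [Matrix.trace_smul, hVortho, smul_eq_mul]
    rw [Finset.sum_eq_single i]
    · rw [if_pos rfl]; push_cast; ring
    · intro j _ hj
      simp [Ne.symm hj]
    · intro h; exact absurd (Finset.mem_univ i) h
  have hexp : (R * R).trace = (N * N).trace - (N * S).trace - (S * N).trace + (S * S).trace := by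
    rw [hR]
    rw [Matrix.sub_mul, Matrix.mul_sub, Matrix.mul_sub]
    rw [Matrix.trace_sub, Matrix.trace_sub, Matrix.trace_sub]
    ring
  rw [hexp, hNS, hSN, hSS] at h0
  simp only [Complex.add_re, Complex.sub_re, Complex.re_sum, Complex.re_ofReal_mul,
    Complex.ofReal_re] at h0
  have : ∀ i ∈ Finset.univ, t i * ((N * V i).trace).re = (t i)^2 := by
    intro i _; rw [ht]; ring
  rw [Finset.sum_congr rfl this] at h0
  linarith

/-- averaged total variation distance bound for a POVM measuring
the perturbed states σ_z versus the maximally mixed state, in terms of the trace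
norm `T` of the measurement information channel. -/
theorem averaged_tv_le_sqrt_info_channel
    {d ℓ : ℕ} (hd : 1 ≤ d) (hℓ : 1 ≤ ℓ)
    {𝒳 : Type*} [Fintype 𝒳]
    (M : 𝒳 → Matrix (Fin d) (Fin d) ℂ)
    (hMpsd : ∀ x, (M x).PosSemidef)
    (hMsum : ∑ x, M x = 1)
    (hMtr : ∀ x, 0 < (M x).trace.re)
    (V : Fin ℓ → Matrix (Fin d) (Fin d) ℂ)
    (hVherm : ∀ i, (V i).IsHermitian)
    (hVortho : ∀ i j, ((V i) * (V j)).trace = if i = j then 1 else 0)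
    (ε : ℝ) (hε : 0 < ε)
    (a : (Fin ℓ → Bool) → ℝ) (ha : ∀ z, a z ∈ Set.Icc (0 : ℝ) 1)
    (σ : (Fin ℓ → Bool) → Matrix (Fin d) (Fin d) ℂ)
    (hσ : ∀ z, σ z = ((d : ℂ))⁻¹ • (1 : Matrix (Fin d) (Fin d) ℂ)
      + ((a z * (ε / Real.sqrt (d * ℓ)) : ℝ) : ℂ) •
          ∑ i, (if z i then (1 : ℂ) else -1) • V i)
    (T : ℝ) (hT : T = ∑ x, ((M x * M x).trace.re) / (M x).trace.re) :
    ((1 : ℝ) / 2 ^ ℓ) * ∑ z : Fin ℓ → Bool,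
        (1 / 2) * ∑ x, |((M x) * (σ z)).trace.re - (M x).trace.re / d|
      ≤ ε * Real.sqrt (T / (2 * ℓ)) := by
  have hd0 : (0:ℝ) < d := by exact_mod_cast hd
  have hℓ0 : (0:ℝ) < ℓ := by exact_mod_cast hℓ
  set c : ℝ := ε / Real.sqrt (d * ℓ) with hc
  have hsd : (0:ℝ) < Real.sqrt d := Real.sqrt_pos.mpr hd0
  have hsl : (0:ℝ) < Real.sqrt ℓ := Real.sqrt_pos.mpr hℓ0
  have hsdl : Real.sqrt ((d:ℝ) * ℓ) = Real.sqrt d * Real.sqrt ℓ := Real.sqrt_mul hd0.le _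
  have hc0 : 0 < c := by
    rw [hc]
    exact div_pos hε (by rw [hsdl]; positivity)
  set t : 𝒳 → Fin ℓ → ℝ := fun x i => ((M x * V i).trace).re with htdef
  -- Step A: identify the deviation
  have hkey : ∀ (z : Fin ℓ → Bool) (x : 𝒳),
      ((M x) * (σ z)).trace.re - (M x).trace.re / d
        = (a z * c) * ∑ i, (if z i then (1:ℝ) else -1) * t x i := by
    intro z x
    have h1 : ((M x) * (σ z)).trace
        = (((d:ℝ)⁻¹ : ℝ) : ℂ) * (M x).trace
          + (((a z * c) : ℝ) : ℂ) * ∑ i, (((if z i then (1:ℝ) else -1) : ℝ) : ℂ)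
              * ((M x) * (V i)).trace := by
      rw [hσ z, Matrix.mul_add, Matrix.trace_add]
      congr 1
      · rw [Matrix.mul_smul, Matrix.mul_one, Matrix.trace_smul, smul_eq_mul]
        push_cast
        ring
      · rw [Matrix.mul_smul, Matrix.trace_smul, smul_eq_mul, Matrix.mul_sum,
          Matrix.trace_sum]
        congr 1
        apply Finset.sum_congr rfl
        intro i _
        rw [Matrix.mul_smul, Matrix.trace_smul, smul_eq_mul]
        congr 1
        cases z i <;> simp
    have h2 : ((M x) * (σ z)).trace.re
        = (d:ℝ)⁻¹ * (M x).trace.re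
          + (a z * c) * ∑ i, (if z i then (1:ℝ) else -1) * t x i := by
      rw [h1, Complex.add_re, Complex.re_ofReal_mul, Complex.re_ofReal_mul, Complex.re_sum]
      congr 2
      apply Finset.sum_congr rfl
      intro i _
      rw [Complex.re_ofReal_mul]
    rw [h2, htdef]
    field_simp
    ring
  -- the random sum
  set X : (Fin ℓ → Bool) → 𝒳 → ℝ := fun z x => ∑ i, (if z i then (1:ℝ) else -1) * t x i
    with hX
  set q : 𝒳 → ℝ := fun x => ((M x * M x).trace).re with hq
  set p : 𝒳 → ℝ := fun x => (M x).trace.re with hp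
  have hq0 : ∀ x, 0 ≤ q x := by
    intro x
    have := trace_mul_conjTranspose_re_nonneg (M x)
    rwa [(hMpsd x).isHermitian.eq] at this
  -- per z bound
  have hb1 : ∀ z : Fin ℓ → Bool,
      ∑ x, |((M x) * (σ z)).trace.re - (M x).trace.re / d| ≤ c * ∑ x, |X z x| := by
    intro z
    rw [Finset.mul_sum]
    apply Finset.sum_le_sum
    intro x _
    rw [hkey z x, abs_mul, abs_of_nonneg (mul_nonneg (ha z).1 hc0.le)]
    have := (ha z).2
    calc a z * c * |X z x| ≤ 1 * c * |X z x| := by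
          apply mul_le_mul_of_nonneg_right _ (abs_nonneg _)
          exact mul_le_mul_of_nonneg_right this hc0.le
      _ = c * |X z x| := by ring
  -- per x bound over z
  have hb2 : ∀ x : 𝒳, ∑ z : Fin ℓ → Bool, |X z x| ≤ 2^ℓ * Real.sqrt (∑ i, (t x i)^2) := by
    intro x
    have hcs := Finset.sum_mul_sq_le_sq_mul_sq Finset.univ (fun _ : Fin ℓ → Bool => (1:ℝ))
      (fun z => |X z x|)
    simp only [one_mul, one_pow, sq_abs] at hcs
    have hcard : ∑ _z : Fin ℓ → Bool, (1:ℝ) = 2^ℓ := by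
      simp [Finset.card_univ]
    have hsq : ∑ z : Fin ℓ → Bool, (X z x)^2 = 2^ℓ * ∑ i, (t x i)^2 := sq_sum_signs (t x)
    rw [hcard, hsq] at hcs
    have h1 : (∑ z : Fin ℓ → Bool, |X z x|)^2 ≤ (2^ℓ * Real.sqrt (∑ i, (t x i)^2))^2 := by
      calc (∑ z : Fin ℓ → Bool, |X z x|)^2 ≤ 2^ℓ * (2^ℓ * ∑ i, (t x i)^2) := hcs
        _ = (2^ℓ * Real.sqrt (∑ i, (t x i)^2))^2 := by
            rw [mul_pow, Real.sq_sqrt (Finset.sum_nonneg fun i _ => sq_nonneg _)]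
            ring
    have h2 := Real.sqrt_le_sqrt h1
    rwa [Real.sqrt_sq (Finset.sum_nonneg fun z _ => abs_nonneg _),
      Real.sqrt_sq (by positivity)] at h2
  
  have hb3 : ∀ x : 𝒳, Real.sqrt (∑ i, (t x i)^2) ≤ Real.sqrt (q x) := by
    intro x
    exact Real.sqrt_le_sqrt (bessel (M x) (hMpsd x).isHermitian V hVherm hVortho)
  have hpd : ∑ x, p x = d := by
    have h1 : ∑ x, (M x).trace = ((d:ℕ) : ℂ) := by
      rw [← Matrix.trace_sum, hMsum, Matrix.trace_one]
      simp
    have h2 : ∑ x, ((M x).trace).re = ((∑ x, (M x).trace)).re := (Complex.re_sum _ _).symm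
    rw [hp]
    rw [h2, h1]
    simp
  have hT0 : 0 ≤ T := by
    rw [hT]
    exact Finset.sum_nonneg fun x _ => div_nonneg (hq0 x) (hMtr x).le
  have hb4 : ∑ x, Real.sqrt (q x) ≤ Real.sqrt T * Real.sqrt d := by
    have hcs := Finset.sum_sq_le_sum_mul_sum_of_sq_eq_mul Finset.univ
      (r := fun x => Real.sqrt (q x)) (f := fun x => q x / p x) (g := p)
      (fun x _ => div_nonneg (hq0 x) (hMtr x).le)
      (fun x _ => (hMtr x).le)
      (fun x _ => by
        rw [Real.sq_sqrt (hq0 x), div_mul_cancel₀ _ (ne_of_gt (hMtr x))])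
    rw [hpd, ← hT] at hcs
    have h1 := Real.sqrt_le_sqrt hcs
    rwa [Real.sqrt_sq (Finset.sum_nonneg fun x _ => Real.sqrt_nonneg _),
      Real.sqrt_mul hT0] at h1
  have hs2 : Real.sqrt 2 ≤ 2 := by
    nlinarith [Real.sq_sqrt (by norm_num : (0:ℝ) ≤ 2), Real.sqrt_nonneg 2]
  calc ((1 : ℝ) / 2 ^ ℓ) * ∑ z : Fin ℓ → Bool,
        (1 / 2) * ∑ x, |((M x) * (σ z)).trace.re - (M x).trace.re / d|
      ≤ ((1 : ℝ) / 2 ^ ℓ) * ∑ z : Fin ℓ → Bool, (1 / 2) * (c * ∑ x, |X z x|) := by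
        apply mul_le_mul_of_nonneg_left _ (by positivity)
        apply Finset.sum_le_sum
        intro z _
        exact mul_le_mul_of_nonneg_left (hb1 z) (by norm_num)
    _ = ((1 : ℝ) / 2 ^ ℓ) * ((c/2) * ∑ x, ∑ z : Fin ℓ → Bool, |X z x|) := by
        rw [show (∑ x, ∑ z : Fin ℓ → Bool, |X z x|) = ∑ z : Fin ℓ → Bool, ∑ x, |X z x|
          from Finset.sum_comm]
        congr 1
        rw [Finset.mul_sum]
        exact Finset.sum_congr rfl fun z _ => by ring
    _ ≤ ((1 : ℝ) / 2 ^ ℓ) * ((c/2) * ∑ x, 2^ℓ * Real.sqrt (q x)) := by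
        apply mul_le_mul_of_nonneg_left _ (by positivity)
        apply mul_le_mul_of_nonneg_left _ (by positivity)
        apply Finset.sum_le_sum
        intro x _
        exact le_trans (hb2 x)
          (mul_le_mul_of_nonneg_left (hb3 x) (by positivity))
    _ = (c/2) * ∑ x, Real.sqrt (q x) := by
        rw [← Finset.mul_sum]
        have h2ℓ : ((2:ℝ)^ℓ) ≠ 0 := by positivity
        field_simp
    _ ≤ (c/2) * (Real.sqrt T * Real.sqrt d) :=
        mul_le_mul_of_nonneg_left hb4 (by positivity)
    _ ≤ ε * Real.sqrt (T / (2 * ℓ)) := by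
        have hkey2 : c / 2 * (Real.sqrt T * Real.sqrt d) = ε * Real.sqrt T / (2 * Real.sqrt ℓ) := by
          rw [hc, hsdl]
          field_simp
        have hrhs : Real.sqrt (T / (2 * ℓ)) = Real.sqrt T / (Real.sqrt 2 * Real.sqrt ℓ) := by
          rw [Real.sqrt_div hT0, Real.sqrt_mul (by norm_num : (0:ℝ) ≤ 2)]
        rw [hkey2, hrhs, mul_div_assoc]
        apply mul_le_mul_of_nonneg_left _ hε.le
        exact div_le_div_of_nonneg_left (Real.sqrt_nonneg T) (by positivity)
          (mul_le_mul_of_nonneg_right hs2 hsl.le)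
end

section
/- Let ρ, ρ̂, ρ̃ be Hermitian d×d complex matrices such that ρ has rank at most r, ρ̃ has rank at most r, and ‖ρ̃ − ρ̂‖_F ≤ ‖ρ − ρ̂‖_F (ρ̃ is at least as close to ρ̂ in Frobenius norm as ρ is). Then the trace norm satisfies ‖ρ̃ − ρ‖₁ ≤ 2·√(2r)·‖ρ̂ − ρ‖_F. -/
open Matrix
open scoped BigOperators

attribute [local instance] Matrix.frobeniusNormedAddCommGroup

/-- For a Hermitian matrix, the real part of `Tr (A*A)` is the square of the
Frobenius norm. -/
private lemma trace_sq_eq_sq_norm {d : ℕ} (A : Matrix (Fin d) (Fin d) ℂ)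
    (hA : A.IsHermitian) : ((A * A).trace).re = ‖A‖ ^ 2 := by
  have h1 : ((A * A).trace).re = ∑ i, ∑ j, ‖A j i‖ ^ 2 := by
    have : A * A = Aᴴ * A := by rw [hA.eq]
    rw [this, Matrix.trace, Complex.re_sum]
    refine Finset.sum_congr rfl fun i _ => ?_
    rw [Matrix.diag_apply, Matrix.mul_apply, Complex.re_sum]
    refine Finset.sum_congr rfl fun j _ => ?_
    simp only [Matrix.conjTranspose_apply]
    rw [show star (A j i) = (starRingEnd ℂ) (A j i) from rfl, mul_comm,
      Complex.mul_conj, Complex.ofReal_re, Complex.normSq_eq_norm_sq]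
  rw [h1, Matrix.frobenius_norm_def, ← Real.rpow_natCast _ 2,
    ← Real.rpow_mul (by positivity)]
  norm_num
  rw [Finset.sum_comm]

private lemma sqrt_trace_sq_eq_norm {d : ℕ} (A : Matrix (Fin d) (Fin d) ℂ)
    (hA : A.IsHermitian) : Real.sqrt (((A * A).trace).re) = ‖A‖ := by
  rw [trace_sq_eq_sq_norm A hA, Real.sqrt_sq (norm_nonneg _)]

/-- The trace of `A*A` equals the sum of squared eigenvalues for Hermitian `A`. -/
private lemma trace_sq_eq_sum_sq_eigs {d : ℕ} (A : Matrix (Fin d) (Fin d) ℂ)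
    (hA : A.IsHermitian) :
    ((A * A).trace).re = ∑ i, (hA.eigenvalues i) ^ 2 := by
  have hU := (Matrix.mem_unitaryGroup_iff').mp (hA.eigenvectorUnitary).2
  set U : Matrix (Fin d) (Fin d) ℂ := (hA.eigenvectorUnitary : Matrix (Fin d) (Fin d) ℂ)
  set D : Matrix (Fin d) (Fin d) ℂ := Matrix.diagonal (RCLike.ofReal ∘ hA.eigenvalues)
  have hspec : A = U * D * star U := hA.spectral_theorem
  have hAA : A * A = U * (D * D) * star U := by
    rw [hspec]
    have : star U * U = 1 := hU
    calc U * D * star U * (U * D * star U)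
        = U * D * (star U * U) * D * star U := by noncomm_ring
      _ = U * (D * D) * star U := by rw [this]; noncomm_ring
  have htr : (A * A).trace = (D * D).trace := by
    rw [hAA, Matrix.trace_mul_cycle, hU, one_mul]
  rw [htr]
  have : D * D = Matrix.diagonal (fun i => ((hA.eigenvalues i : ℂ)) ^ 2) := by
    rw [Matrix.diagonal_mul_diagonal]
    funext i
    simp [sq]
  rw [this, Matrix.trace_diagonal, Complex.re_sum]
  refine Finset.sum_congr rfl fun i _ => ?_
  norm_cast

private lemma matrix_rank_sub_le {d : ℕ} (A B : Matrix (Fin d) (Fin d) ℂ) :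
    (A - B).rank ≤ A.rank + B.rank := by
  unfold Matrix.rank
  have hle : LinearMap.range (A - B).mulVecLin
      ≤ LinearMap.range A.mulVecLin ⊔ LinearMap.range B.mulVecLin := by
    rintro x ⟨y, rfl⟩
    rw [Matrix.mulVecLin_apply, Matrix.sub_mulVec]
    exact Submodule.sub_mem _ (Submodule.mem_sup_left ⟨y, rfl⟩)
      (Submodule.mem_sup_right ⟨y, rfl⟩)
  calc Module.finrank ℂ (LinearMap.range (A - B).mulVecLin)
      ≤ Module.finrank ℂ ↥(LinearMap.range A.mulVecLin ⊔ LinearMap.range B.mulVecLin) :=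
        Submodule.finrank_mono hle
    _ ≤ _ := Submodule.finrank_add_le_finrank_add_finrank _ _

/-- if `ρ̃` is a rank-`r` matrix at least as close to the estimate `ρ̂`
in Frobenius norm as the rank-`r` matrix `ρ` is, then the trace distance between
`ρ̃` and `ρ` is at most `2·√(2r)` times the Frobenius distance `‖ρ̂ − ρ‖_F`. -/
theorem rank_r_projection_trace_norm_bound
    {d r : ℕ} (ρ ρhat ρtil : Matrix (Fin d) (Fin d) ℂ)
    (hρ : ρ.IsHermitian) (hρhat : ρhat.IsHermitian) (hρtil : ρtil.IsHermitian)
    (hrρ : ρ.rank ≤ r) (hrρtil : ρtil.rank ≤ r)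
    (hclose : Real.sqrt (((ρtil - ρhat) * (ρtil - ρhat)).trace.re)
      ≤ Real.sqrt (((ρ - ρhat) * (ρ - ρhat)).trace.re)) :
    ∑ i, |(hρtil.sub hρ).eigenvalues i|
      ≤ 2 * Real.sqrt (2 * r) * Real.sqrt (((ρhat - ρ) * (ρhat - ρ)).trace.re) := by
  classical
  set A := ρtil - ρ with hAdef
  set hA := hρtil.sub hρ
  set lam := hA.eigenvalues with hlam
  -- Frobenius norms
  have hsub1 : (ρtil - ρhat).IsHermitian := hρtil.sub hρhat
  have hsub2 : (ρ - ρhat).IsHermitian := hρ.sub hρhat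
  have hsub3 : (ρhat - ρ).IsHermitian := hρhat.sub hρ
  rw [sqrt_trace_sq_eq_norm _ hsub1, sqrt_trace_sq_eq_norm _ hsub2] at hclose
  rw [sqrt_trace_sq_eq_norm _ hsub3]
  -- Triangle inequality: ‖A‖ ≤ 2 ‖ρhat - ρ‖
  have htri : ‖A‖ ≤ 2 * ‖ρhat - ρ‖ := by
    have h1 : A = (ρtil - ρhat) + (ρhat - ρ) := by rw [hAdef]; abel
    calc ‖A‖ ≤ ‖ρtil - ρhat‖ + ‖ρhat - ρ‖ := by rw [h1]; exact norm_add_le _ _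
      _ ≤ ‖ρ - ρhat‖ + ‖ρhat - ρ‖ := by gcongr
      _ = ‖ρhat - ρ‖ + ‖ρhat - ρ‖ := by rw [norm_sub_rev]
      _ = 2 * ‖ρhat - ρ‖ := by ring
  -- rank bound
  have hrank : A.rank ≤ 2 * r := by
    calc A.rank ≤ ρtil.rank + ρ.rank := matrix_rank_sub_le _ _
      _ ≤ r + r := add_le_add hrρtil hrρ
      _ = 2 * r := by ring
  -- sum of squares of eigenvalues
  have hsumsq : ∑ i, (lam i) ^ 2 = ‖A‖ ^ 2 := by
    rw [hlam, ← trace_sq_eq_sum_sq_eigs A hA, trace_sq_eq_sq_norm A hA]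
  -- support
  set s : Finset (Fin d) := Finset.univ.filter (fun i => lam i ≠ 0) with hs
  have hcard : s.card = A.rank := by
    rw [hA.rank_eq_card_non_zero_eigs]
    rw [Fintype.card_subtype]
  have hsum_eq : ∑ i, |lam i| = ∑ i ∈ s, |lam i| := by
    symm
    apply Finset.sum_subset (Finset.subset_univ _)
    intro i _ hi
    simp only [hs, Finset.mem_filter, Finset.mem_univ, true_and, not_not] at hi
    simp [hi]
  -- Cauchy-Schwarz
  have hCS : (∑ i ∈ s, |lam i|) ^ 2 ≤ s.card * ∑ i, (lam i) ^ 2 := by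
    calc (∑ i ∈ s, |lam i|) ^ 2 ≤ s.card * ∑ i ∈ s, |lam i| ^ 2 :=
          sq_sum_le_card_mul_sum_sq
      _ ≤ s.card * ∑ i, (lam i) ^ 2 := by
          apply mul_le_mul_of_nonneg_left _ (Nat.cast_nonneg _)
          simp_rw [sq_abs]
          exact Finset.sum_le_sum_of_subset_of_nonneg (Finset.subset_univ _)
            (fun i _ _ => sq_nonneg _)
  have hmain : ∑ i, |lam i| ≤ Real.sqrt ((s.card : ℝ) * ‖A‖ ^ 2) := by
    rw [hsum_eq, Real.le_sqrt (Finset.sum_nonneg fun i _ => abs_nonneg _) (by positivity)]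
    rw [← hsumsq]
    exact_mod_cast hCS
  calc ∑ i, |lam i| ≤ Real.sqrt ((s.card : ℝ) * ‖A‖ ^ 2) := hmain
    _ = Real.sqrt (s.card : ℝ) * ‖A‖ := by
        rw [Real.sqrt_mul (Nat.cast_nonneg _), Real.sqrt_sq (norm_nonneg _)]
    _ ≤ Real.sqrt (2 * r) * (2 * ‖ρhat - ρ‖) := by
        apply mul_le_mul _ htri (norm_nonneg _) (Real.sqrt_nonneg _)
        apply Real.sqrt_le_sqrt
        rw [hcard]
        exact_mod_cast hrank
    _ = 2 * Real.sqrt (2 * r) * ‖ρhat - ρ‖ := by ring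
end

section
/- For every Hermitian d×d complex matrix M, the matrix (3·(Tr M)² + 3·Tr(M²))·I − 2·(Tr M)·M − 2·M² is positive semidefinite. -/
open Matrix
open scoped ComplexOrder

/-- for every Hermitian `M`, the matrix
`(3(Tr M)² + 3 Tr(M²))·I − 2(Tr M)·M − 2M²` is positive semidefinite. -/
theorem sos_second_moment_matrix_posSemidef
    {d : ℕ} (M : Matrix (Fin d) (Fin d) ℂ) (hM : M.IsHermitian) :
    ((3 * M.trace ^ 2 + 3 * (M * M).trace) • (1 : Matrix (Fin d) (Fin d) ℂ)
      - (2 * M.trace) • M - (2 : ℂ) • (M * M)).PosSemidef := by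
  classical
  set U : Matrix (Fin d) (Fin d) ℂ := (hM.eigenvectorUnitary : Matrix (Fin d) (Fin d) ℂ)
  set ev : Fin d → ℝ := hM.eigenvalues
  set D : Matrix (Fin d) (Fin d) ℂ := diagonal (Complex.ofReal ∘ ev)
  have hU : Uᴴ * U = 1 := by
    simpa [U, star_eq_conjTranspose] using
      (Matrix.mem_unitaryGroup_iff').mp hM.eigenvectorUnitary.2
  have hU' : U * Uᴴ = 1 := by
    simpa [U, star_eq_conjTranspose] using
      (Matrix.mem_unitaryGroup_iff).mp hM.eigenvectorUnitary.2
  have hspec : M = U * D * Uᴴ := by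
    simpa [U, D, ev, star_eq_conjTranspose] using hM.spectral_theorem
  have hMM : M * M = U * (D * D) * Uᴴ := by
    rw [hspec]
    calc U * D * Uᴴ * (U * D * Uᴴ) = U * D * (Uᴴ * U) * D * Uᴴ := by
          simp only [mul_assoc]
      _ = U * (D * D) * Uᴴ := by rw [hU]; simp only [mul_one, mul_assoc]
  have htr : M.trace = (∑ i, ev i : ℝ) := by
    rw [hspec, trace_mul_cycle, hU, one_mul]
    simp [D, trace_diagonal]
  have htr2 : (M * M).trace = (∑ i, (ev i) ^ 2 : ℝ) := by
    rw [hMM, trace_mul_cycle, hU, one_mul]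
    simp [D, diagonal_mul_diagonal, trace_diagonal, sq]
  set s : ℝ := ∑ i, ev i
  set q : ℝ := ∑ i, (ev i) ^ 2
  have key : ((3 * M.trace ^ 2 + 3 * (M * M).trace) • (1 : Matrix (Fin d) (Fin d) ℂ)
      - (2 * M.trace) • M - (2 : ℂ) • (M * M))
      = U * diagonal (fun i => ((3 * s ^ 2 + 3 * q - 2 * s * ev i - 2 * (ev i) ^ 2 : ℝ) : ℂ)) * Uᴴ := by
    have h1 : (1 : Matrix (Fin d) (Fin d) ℂ) = U * 1 * Uᴴ := by rw [mul_one, hU']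
    rw [htr, htr2, h1, hMM, hspec]
    have hsmul : ∀ (c : ℂ) (A : Matrix (Fin d) (Fin d) ℂ),
        c • (U * A * Uᴴ) = U * (c • A) * Uᴴ := fun c A => by
      rw [Matrix.mul_smul, Matrix.smul_mul]
    rw [hsmul, hsmul, hsmul, ← Matrix.sub_mul, ← Matrix.mul_sub, ← Matrix.sub_mul,
      ← Matrix.mul_sub]
    have hDD : D * D = diagonal fun i => (ev i : ℂ) ^ 2 := by
      simp [D, diagonal_mul_diagonal, sq]
    rw [hDD]
    congr 2
    ext i j
    by_cases h : i = j <;>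
      simp [D, diagonal, h, Matrix.one_apply, Complex.ofReal_sum]
  rw [key]
  apply Matrix.PosSemidef.mul_mul_conjTranspose_same
  rw [Matrix.posSemidef_diagonal_iff]
  intro i
  have hq : (ev i) ^ 2 ≤ q := by
    exact Finset.single_le_sum (fun j _ => sq_nonneg (ev j)) (Finset.mem_univ i)
  have : (0 : ℝ) ≤ 3 * s ^ 2 + 3 * q - 2 * s * ev i - 2 * (ev i) ^ 2 := by nlinarith [sq_nonneg (s - ev i)]
  exact Complex.zero_le_real.mpr this
end

section
/- Let M be a Hermitian d×d complex matrix, let ρ be a positive semidefinite Hermitian d×d complex matrix with Tr(ρ²) ≤ 1, and let k ≥ 1 be an integer. Then (Tr(M^k ρ))² ≤ (Tr(M²))^k. -/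
open Matrix
open scoped ComplexOrder

private lemma sum_pow_le_pow_sum' {ι : Type*} (s : Finset ι) (f : ι → ℝ)
    (hf : ∀ i ∈ s, 0 ≤ f i) {k : ℕ} (hk : 1 ≤ k) :
    ∑ i ∈ s, f i ^ k ≤ (∑ i ∈ s, f i) ^ k := by
  obtain ⟨m, rfl⟩ : ∃ m, k = m + 1 := ⟨k - 1, (Nat.succ_pred_eq_of_pos hk).symm⟩
  calc ∑ i ∈ s, f i ^ (m + 1) ≤ ∑ i ∈ s, f i * (∑ j ∈ s, f j) ^ m := by
        refine Finset.sum_le_sum fun i hi => ?_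
        rw [pow_succ']
        exact mul_le_mul_of_nonneg_left
          (pow_le_pow_left₀ (hf i hi) (Finset.single_le_sum hf hi) m) (hf i hi)
    _ = (∑ i ∈ s, f i) ^ (m + 1) := by
        rw [← Finset.sum_mul, pow_succ']

/-- for Hermitian `M`, p.s.d. `ρ` with `Tr(ρ²) ≤ 1` and `k ≥ 1`,
`(Tr(M^k ρ))² ≤ (Tr(M²))^k`. -/
theorem trace_pow_state_sq_le
    {d : ℕ} (M ρ : Matrix (Fin d) (Fin d) ℂ)
    (hM : M.IsHermitian) (hρ : ρ.PosSemidef) (hρ2 : ((ρ * ρ).trace).re ≤ 1)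
    (k : ℕ) (hk : 1 ≤ k) :
    (((M ^ k * ρ).trace).re) ^ 2 ≤ (((M * M).trace).re) ^ k := by
  classical
  set U : Matrix (Fin d) (Fin d) ℂ := (hM.eigenvectorUnitary : Matrix (Fin d) (Fin d) ℂ) with hU
  set lam := hM.eigenvalues with hlam
  have hUU : star U * U = 1 := Unitary.coe_star_mul_self hM.eigenvectorUnitary
  have hUU' : U * star U = 1 := Unitary.coe_mul_star_self hM.eigenvectorUnitary
  set σ : Matrix (Fin d) (Fin d) ℂ := star U * ρ * U with hσdef
  -- σ is PSD
  have hσ : σ.PosSemidef := by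
    have := hρ.conjTranspose_mul_mul_same (U)
    simpa [hσdef, Matrix.star_eq_conjTranspose] using this
  have hspec : M = U * diagonal (fun i => (lam i : ℂ)) * star U := by
    have := hM.spectral_theorem
    rw [Unitary.conjStarAlgAut_apply] at this
    rw [hU, hlam]
    exact this
  have hMn : ∀ n : ℕ, M ^ n = U * (diagonal (fun i => (lam i : ℂ))) ^ n * star U := by
    intro n
    induction n with
    | zero => simp [hUU']
    | succ m ih =>
      conv_lhs => rw [pow_succ, ih, hspec]
      rw [pow_succ]
      simp only [Matrix.mul_assoc]
      rw [← Matrix.mul_assoc (star U) U, hUU, Matrix.one_mul]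
  -- key trace formula
  have key : ∀ (n : ℕ) (B : Matrix (Fin d) (Fin d) ℂ),
      ((M ^ n * B).trace) = ∑ i, (lam i : ℂ) ^ n * (star U * B * U) i i := by
    intro n B
    rw [hMn n]
    have h1 : U * diagonal (fun i => (lam i : ℂ)) ^ n * star U * B =
        U * ((diagonal (fun i => (lam i : ℂ)) ^ n) * (star U * B)) := by
      simp [Matrix.mul_assoc]
    rw [h1, Matrix.trace_mul_comm, Matrix.mul_assoc, diagonal_pow, Matrix.trace]
    simp [Matrix.diag, Matrix.diagonal_mul, Matrix.mul_assoc]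
  -- diagonal entries of σ are nonneg reals
  have hσdiag : ∀ i, 0 ≤ σ i i := by
    intro i
    exact hσ.diag_nonneg
  set D : Fin d → ℝ := fun i => (σ i i).re with hD
  have hDnn : ∀ i, 0 ≤ D i := fun i => (Complex.le_def.mp (hσdiag i)).1
  have hDim : ∀ i, (σ i i).im = 0 := fun i => ((Complex.le_def.mp (hσdiag i)).2).symm
  have hσii : ∀ i, σ i i = (D i : ℂ) := by
    intro i
    apply Complex.ext <;> simp [hD, hDim i]
  -- LHS trace as a real sum
  have hLHS : ((M ^ k * ρ).trace).re = ∑ i, lam i ^ k * D i := by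
    rw [key k ρ, ← hσdef, Complex.re_sum]
    refine Finset.sum_congr rfl fun i _ => ?_
    rw [hσii i, ← Complex.ofReal_pow, ← Complex.ofReal_mul, Complex.ofReal_re]
  -- RHS trace as a real sum
  have hRHS : ((M * M).trace).re = ∑ i, lam i ^ 2 := by
    have h2 : M * M = M ^ 2 * 1 := by rw [pow_two, Matrix.mul_one]
    rw [h2, key 2 1, Matrix.mul_one, hUU]
    rw [Complex.re_sum]
    refine Finset.sum_congr rfl fun i _ => ?_
    simp [← Complex.ofReal_pow]
  -- Tr(σ²) = Tr(ρ²)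
  have hσsq : (σ * σ).trace = (ρ * ρ).trace := by
    have h3 : σ * σ = star U * ((ρ * ρ) * U) := by
      rw [hσdef]
      simp only [Matrix.mul_assoc]
      rw [← Matrix.mul_assoc U (star U), hUU', Matrix.one_mul]
    rw [h3, Matrix.trace_mul_comm, Matrix.mul_assoc, hUU', Matrix.mul_one]
  -- ∑ D i ^ 2 ≤ 1
  have hDsum : ∑ i, D i ^ 2 ≤ 1 := by
    have hmono : ∑ i, D i ^ 2 ≤ ((σ * σ).trace).re := by
      have htr : ((σ * σ).trace).re = ∑ i, ∑ j, Complex.normSq (σ i j) := by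
        rw [Matrix.trace, Complex.re_sum]
        refine Finset.sum_congr rfl fun i _ => ?_
        rw [Matrix.diag, Matrix.mul_apply, Complex.re_sum]
        refine Finset.sum_congr rfl fun j _ => ?_
        have : σ j i = starRingEnd ℂ (σ i j) := by
          conv_lhs => rw [← hσ.1]
          rfl
        rw [this, Complex.mul_conj]
        simp
      rw [htr]
      refine Finset.sum_le_sum fun i _ => ?_
      calc D i ^ 2 = Complex.normSq (σ i i) := by
            rw [hσii i]; simp [Complex.normSq_ofReal, sq]
        _ ≤ ∑ j, Complex.normSq (σ i j) :=
            Finset.single_le_sum (fun j _ => Complex.normSq_nonneg _) (Finset.mem_univ i)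
    calc ∑ i, D i ^ 2 ≤ ((σ * σ).trace).re := hmono
      _ = ((ρ * ρ).trace).re := by rw [hσsq]
      _ ≤ 1 := hρ2
  -- finish: Cauchy–Schwarz + power sum inequality
  rw [hLHS, hRHS]
  calc (∑ i, lam i ^ k * D i) ^ 2
      ≤ (∑ i, (lam i ^ k) ^ 2) * ∑ i, D i ^ 2 :=
        Finset.sum_mul_sq_le_sq_mul_sq _ _ _
    _ ≤ (∑ i, (lam i ^ k) ^ 2) * 1 := by
        refine mul_le_mul_of_nonneg_left hDsum ?_
        exact Finset.sum_nonneg fun i _ => sq_nonneg _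
    _ = ∑ i, (lam i ^ 2) ^ k := by
        rw [mul_one]
        exact Finset.sum_congr rfl fun i _ => by rw [← pow_mul, ← pow_mul, mul_comm]
    _ ≤ (∑ i, lam i ^ 2) ^ k :=
        sum_pow_le_pow_sum' _ _ (fun i _ => sq_nonneg _) hk
end

section
/- Let ρ be a density matrix on ℂ^d and e₀ a fixed unit vector in ℂ^d. Then d · ∫_{U(d)} (U e₀)(U e₀)^† · ⟨U e₀, ρ (U e₀)⟩ dμ(U) = (I + ρ)/(d + 1), where μ is Haar measure on the unitary group U(d). In particular, the mean of the rank-one outcome of the uniform POVM applied to ρ equals (I + ρ)/(d + 1). -/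
open Matrix MeasureTheory
open scoped BigOperators ComplexOrder ComplexConjugate
namespace UPovmAux

variable {d : ℕ}

noncomputable def vv (e₀ : Fin d → ℂ) (U : Matrix.unitaryGroup (Fin d) ℂ) : Fin d → ℂ :=
  (U : Matrix (Fin d) (Fin d) ℂ).mulVec e₀

noncomputable def P (e₀ : Fin d → ℂ) (j l k m : Fin d) (U : Matrix.unitaryGroup (Fin d) ℂ) : ℂ :=
  vv e₀ U j * vv e₀ U l * conj (vv e₀ U k) * conj (vv e₀ U m)

lemma cont_vv (e₀ : Fin d → ℂ) (j : Fin d) : Continuous (fun U => vv e₀ U j) := by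
  have h1 : ∀ a : Fin d, Continuous (fun U : Matrix.unitaryGroup (Fin d) ℂ =>
      (U : Matrix (Fin d) (Fin d) ℂ) j a) := by
    intro a
    have h1 : Continuous (fun M : Matrix (Fin d) (Fin d) ℂ => M j a) :=
      (continuous_apply a).comp (continuous_apply j)
    exact h1.comp continuous_subtype_val
  simp only [vv, Matrix.mulVec, dotProduct]
  exact continuous_finset_sum _ (fun a _ => (h1 a).mul continuous_const)

lemma cont_P (e₀ : Fin d → ℂ) (j l k m : Fin d) : Continuous (P e₀ j l k m) := by
  exact (((cont_vv e₀ j).mul (cont_vv e₀ l)).mul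
    (Complex.continuous_conj.comp (cont_vv e₀ k))).mul
    (Complex.continuous_conj.comp (cont_vv e₀ m))

lemma vv_norm (e₀ : Fin d → ℂ) (he₀ : star e₀ ⬝ᵥ e₀ = 1) (U : Matrix.unitaryGroup (Fin d) ℂ) :
    star (vv e₀ U) ⬝ᵥ vv e₀ U = 1 := by
  unfold vv
  rw [Matrix.star_mulVec, ← dotProduct_mulVec, Matrix.mulVec_mulVec]
  have : (U : Matrix (Fin d) (Fin d) ℂ)ᴴ * (U : Matrix (Fin d) (Fin d) ℂ) = 1 :=
    Matrix.UnitaryGroup.star_mul_self U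
  rw [this, Matrix.one_mulVec, he₀]

lemma vv_entry_le (e₀ : Fin d → ℂ) (he₀ : star e₀ ⬝ᵥ e₀ = 1) (U : Matrix.unitaryGroup (Fin d) ℂ)
    (a : Fin d) : ‖vv e₀ U a‖ ≤ 1 := by
  have h := vv_norm e₀ he₀ U
  have h2 : (∑ b, Complex.normSq (vv e₀ U b) : ℝ) = 1 := by
    have : star (vv e₀ U) ⬝ᵥ vv e₀ U = ((∑ b, Complex.normSq (vv e₀ U b) : ℝ) : ℂ) := by
      simp only [dotProduct, Pi.star_apply]
      push_cast
      refine Finset.sum_congr rfl (fun b _ => ?_)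
      rw [RCLike.star_def, ← Complex.normSq_eq_conj_mul_self]
    rw [this] at h
    exact_mod_cast h
  have h3 : Complex.normSq (vv e₀ U a) ≤ 1 := by
    rw [← h2]
    exact Finset.single_le_sum (f := fun b => Complex.normSq (vv e₀ U b))
      (fun b _ => Complex.normSq_nonneg _) (Finset.mem_univ a)
  rw [← Real.sqrt_one]
  rw [show ‖vv e₀ U a‖ = Real.sqrt (Complex.normSq (vv e₀ U a)) from
    by rw [Complex.norm_def]]
  exact Real.sqrt_le_sqrt h3

lemma P_norm_le (e₀ : Fin d → ℂ) (he₀ : star e₀ ⬝ᵥ e₀ = 1) (j l k m : Fin d)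
    (U : Matrix.unitaryGroup (Fin d) ℂ) : ‖P e₀ j l k m U‖ ≤ 1 := by
  unfold P
  simp only [norm_mul, RCLike.norm_conj]
  have h := vv_entry_le e₀ he₀ U
  calc ‖vv e₀ U j‖ * ‖vv e₀ U l‖ * ‖vv e₀ U k‖ * ‖vv e₀ U m‖
      ≤ 1 * 1 * 1 * 1 := by
        gcongr <;> [exact h j; exact h l; exact h k; exact h m]
    _ = 1 := by norm_num

lemma integrable_P [MeasurableSpace (Matrix.unitaryGroup (Fin d) ℂ)]
    [BorelSpace (Matrix.unitaryGroup (Fin d) ℂ)]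
    (μ : Measure (Matrix.unitaryGroup (Fin d) ℂ)) [IsProbabilityMeasure μ]
    (e₀ : Fin d → ℂ) (he₀ : star e₀ ⬝ᵥ e₀ = 1) (j l k m : Fin d) :
    Integrable (P e₀ j l k m) μ :=
  ⟨(cont_P e₀ j l k m).aestronglyMeasurable,
    MeasureTheory.HasFiniteIntegral.of_bounded (C := 1)
      (Filter.Eventually.of_forall (P_norm_le e₀ he₀ j l k m))⟩

noncomputable def T [MeasurableSpace (Matrix.unitaryGroup (Fin d) ℂ)]
    (μ : Measure (Matrix.unitaryGroup (Fin d) ℂ)) (e₀ : Fin d → ℂ) (j l k m : Fin d) : ℂ :=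
  ∫ U, P e₀ j l k m U ∂μ

lemma cont_mul_left (V : Matrix.unitaryGroup (Fin d) ℂ) :
    Continuous (fun U : Matrix.unitaryGroup (Fin d) ℂ => V * U) := by
  apply Continuous.subtype_mk
  show Continuous fun U : Matrix.unitaryGroup (Fin d) ℂ =>
    (V : Matrix (Fin d) (Fin d) ℂ) * (U : Matrix (Fin d) (Fin d) ℂ)
  have : Continuous (fun M : Matrix (Fin d) (Fin d) ℂ => (V : Matrix (Fin d) (Fin d) ℂ) * M) := by
    apply continuous_matrix
    intro i j
    simp only [Matrix.mul_apply]
    exact continuous_finset_sum _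
      (fun a _ => continuous_const.mul ((continuous_apply j).comp (continuous_apply a)))
  exact this.comp continuous_subtype_val

lemma T_inv [MeasurableSpace (Matrix.unitaryGroup (Fin d) ℂ)]
    [BorelSpace (Matrix.unitaryGroup (Fin d) ℂ)]
    (μ : Measure (Matrix.unitaryGroup (Fin d) ℂ)) [IsProbabilityMeasure μ]
    (hinv : ∀ V : Matrix.unitaryGroup (Fin d) ℂ, μ.map (fun U => V * U) = μ)
    (e₀ : Fin d → ℂ) (V : Matrix.unitaryGroup (Fin d) ℂ) (j l k m : Fin d) :
    T μ e₀ j l k m = ∫ U, P e₀ j l k m (V * U) ∂μ := by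
  unfold T
  conv_lhs => rw [← hinv V]
  rw [MeasureTheory.integral_map (cont_mul_left V).aemeasurable
    (cont_P e₀ j l k m).aestronglyMeasurable]

lemma vv_mul (e₀ : Fin d → ℂ) (V U : Matrix.unitaryGroup (Fin d) ℂ) :
    vv e₀ (V * U) = (V : Matrix (Fin d) (Fin d) ℂ).mulVec (vv e₀ U) := by
  unfold vv
  rw [Matrix.mulVec_mulVec]
  rfl

noncomputable def phM (a : Fin d) : Matrix (Fin d) (Fin d) ℂ :=
  Matrix.diagonal (fun b => if b = a then Complex.I else 1)

lemma phM_mem (a : Fin d) : phM a ∈ Matrix.unitaryGroup (Fin d) ℂ := by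
  rw [Matrix.mem_unitaryGroup_iff]
  show phM a * (phM a)ᴴ = 1
  rw [phM, Matrix.diagonal_conjTranspose, Matrix.diagonal_mul_diagonal]
  ext i j
  by_cases hij : i = j
  · subst hij
    by_cases hi : i = a <;>
      simp [Matrix.diagonal_apply_eq, Matrix.one_apply, hi, Complex.mul_conj, Complex.normSq_I]
  · simp [Matrix.diagonal_apply_ne _ hij, Matrix.one_apply, hij]

lemma phM_mulVec (a : Fin d) (w : Fin d → ℂ) :
    (phM a).mulVec w = fun b => (if b = a then Complex.I else 1) * w b := by
  funext b
  simp [phM, Matrix.mulVec_diagonal]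


variable [MeasurableSpace (Matrix.unitaryGroup (Fin d) ℂ)]
    [BorelSpace (Matrix.unitaryGroup (Fin d) ℂ)]
    (μ : Measure (Matrix.unitaryGroup (Fin d) ℂ)) [IsProbabilityMeasure μ]

lemma T_phase
    (hinv : ∀ V : Matrix.unitaryGroup (Fin d) ℂ, μ.map (fun U => V * U) = μ)
    (e₀ : Fin d → ℂ) (a j l k m : Fin d) :
    T μ e₀ j l k m =
      ((if j = a then Complex.I else 1) * (if l = a then Complex.I else 1)
        * (if k = a then -Complex.I else 1) * (if m = a then -Complex.I else 1))
        * T μ e₀ j l k m := by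
  set c : ℂ := (if j = a then Complex.I else 1) * (if l = a then Complex.I else 1)
        * (if k = a then -Complex.I else 1) * (if m = a then -Complex.I else 1) with hc
  have h1 := T_inv μ hinv e₀ ⟨phM a, phM_mem a⟩ j l k m
  have h2 : ∀ U, P e₀ j l k m (⟨phM a, phM_mem a⟩ * U) = c * P e₀ j l k m U := by
    intro U
    have hv : vv e₀ (⟨phM a, phM_mem a⟩ * U) = fun b => (if b = a then Complex.I else 1) * vv e₀ U b := by
      rw [vv_mul]
      exact phM_mulVec a (vv e₀ U)
    simp only [P, hv, hc, _root_.map_mul]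
    rw [show (starRingEnd ℂ) (if k = a then Complex.I else 1) = (if k = a then -Complex.I else 1) by
      by_cases h : k = a <;> simp [h]]
    rw [show (starRingEnd ℂ) (if m = a then Complex.I else 1) = (if m = a then -Complex.I else 1) by
      by_cases h : m = a <;> simp [h]]
    ring
  calc T μ e₀ j l k m = ∫ U, c * P e₀ j l k m U ∂μ := by
        rw [h1]; exact integral_congr_ae (Filter.Eventually.of_forall (fun U => h2 U))
    _ = c * T μ e₀ j l k m := by rw [MeasureTheory.integral_const_mul]; rfl

lemma eq_zero_of_self_eq_mul {c z : ℂ} (hc : c ≠ 1) (h : z = c * z) : z = 0 := by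
  have h2 : (c - 1) * z = 0 := by linear_combination -h
  rcases mul_eq_zero.mp h2 with h3 | h3
  · exact absurd (by linear_combination h3) hc
  · exact h3

lemma T_zero
    (hinv : ∀ V : Matrix.unitaryGroup (Fin d) ℂ, μ.map (fun U => V * U) = μ)
    (e₀ : Fin d → ℂ) {j l k m : Fin d}
    (h : ¬((j = k ∧ l = m) ∨ (j = m ∧ l = k))) : T μ e₀ j l k m = 0 := by
  push_neg at h
  obtain ⟨h1, h2⟩ := h
  by_cases hjk : j = k
  · -- l ≠ m; use a = l
    have hlm : l ≠ m := h1 hjk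
    have hml : m ≠ l := fun hh => hlm hh.symm
    have hp := T_phase μ hinv e₀ l j l k m
    refine eq_zero_of_self_eq_mul ?_ hp
    rw [← hjk]
    by_cases hjl : j = l <;>
      simp [hjl, hml, Complex.ext_iff] <;> norm_num
  · by_cases hjm : j = m
    · -- j = m, so l ≠ k; use a = k
      have hlk : l ≠ k := h2 hjm
      have hmk : m ≠ k := fun hh => hjk (hjm.trans hh)
      have hp := T_phase μ hinv e₀ k j l k m
      refine eq_zero_of_self_eq_mul ?_ hp
      simp [hjk, hlk, hmk, Complex.ext_iff]
    · -- use a = j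
      have hkj : k ≠ j := fun hh => hjk hh.symm
      have hmj : m ≠ j := fun hh => hjm hh.symm
      have hp := T_phase μ hinv e₀ j j l k m
      refine eq_zero_of_self_eq_mul ?_ hp
      by_cases hlj : l = j <;>
        simp [hlj, hkj, hmj, Complex.ext_iff] <;> norm_num

noncomputable def pM (σ : Equiv.Perm (Fin d)) : Matrix (Fin d) (Fin d) ℂ :=
  fun a b => if σ a = b then 1 else 0

lemma pM_mem (σ : Equiv.Perm (Fin d)) : pM σ ∈ Matrix.unitaryGroup (Fin d) ℂ := by
  rw [Matrix.mem_unitaryGroup_iff]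
  ext a b
  show (∑ c, pM σ a c * star (pM σ b c)) = (1 : Matrix (Fin d) (Fin d) ℂ) a b
  have : ∀ c, pM σ a c * star (pM σ b c) = if c = σ a then (if σ b = σ a then 1 else 0) else 0 := by
    intro c
    by_cases h1 : c = σ a
    · subst h1
      by_cases h2 : σ b = σ a <;> simp [pM, h2]
    · have h3 : ¬ σ a = c := fun hh => h1 hh.symm
      simp [pM, h3, h1]
  rw [Finset.sum_congr rfl (fun c _ => this c), Finset.sum_ite_eq' _ (σ a)]
  simp [Matrix.one_apply, σ.injective.eq_iff, eq_comm]

lemma pM_mulVec (σ : Equiv.Perm (Fin d)) (w : Fin d → ℂ) :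
    (pM σ).mulVec w = fun a => w (σ a) := by
  funext a
  simp only [Matrix.mulVec, dotProduct, pM]
  rw [Finset.sum_congr rfl (fun c _ => show (if σ a = c then (1:ℂ) else 0) * w c
    = if c = σ a then w c else 0 by
      by_cases h : σ a = c
      · simp [h]
      · have h3 : ¬ c = σ a := fun hh => h hh.symm
        simp [h, h3])]
  rw [Finset.sum_ite_eq' _ (σ a)]
  simp


lemma T_perm
    (hinv : ∀ V : Matrix.unitaryGroup (Fin d) ℂ, μ.map (fun U => V * U) = μ)
    (e₀ : Fin d → ℂ) (σ : Equiv.Perm (Fin d)) (j l k m : Fin d) :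
    T μ e₀ j l k m = T μ e₀ (σ j) (σ l) (σ k) (σ m) := by
  have h1 := T_inv μ hinv e₀ ⟨pM σ, pM_mem σ⟩ j l k m
  have h2 : ∀ U, P e₀ j l k m (⟨pM σ, pM_mem σ⟩ * U) = P e₀ (σ j) (σ l) (σ k) (σ m) U := by
    intro U
    have hv : vv e₀ (⟨pM σ, pM_mem σ⟩ * U) = fun b => vv e₀ U (σ b) := by
      rw [vv_mul]
      exact pM_mulVec σ (vv e₀ U)
    simp only [P, hv]
  rw [h1]
  exact integral_congr_ae (Filter.Eventually.of_forall h2)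

lemma T_comm (e₀ : Fin d → ℂ) (j l k m : Fin d) :
    T μ e₀ j l k m = T μ e₀ l j m k := by
  unfold T
  refine integral_congr_ae (Filter.Eventually.of_forall (fun U => ?_))
  unfold P
  ring

lemma sum_two {M : Type*} [AddCommMonoid M] {f : Fin d → M} {x y : Fin d} (hxy : x ≠ y)
    (h : ∀ c, c ≠ x → c ≠ y → f c = 0) : ∑ c, f c = f x + f y := by
  rw [← Finset.sum_pair hxy]
  refine (Finset.sum_subset (Finset.subset_univ _) ?_).symm
  intro c _ hc
  simp only [Finset.mem_insert, Finset.mem_singleton, not_or] at hc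
  exact h c hc.1 hc.2

lemma sum_one {M : Type*} [AddCommMonoid M] {f : Fin d → M} {x : Fin d}
    (h : ∀ c, c ≠ x → f c = 0) : ∑ c, f c = f x :=
  Finset.sum_eq_single_of_mem x (Finset.mem_univ x) (fun c _ hc => h c hc)

noncomputable def rc : ℂ := ((Real.sqrt 2)⁻¹ : ℝ)

lemma rc_conj : conj rc = rc := Complex.conj_ofReal _

lemma rc_sq : rc * rc = 2⁻¹ := by
  unfold rc
  rw [← Complex.ofReal_mul, show (Real.sqrt 2)⁻¹ * (Real.sqrt 2)⁻¹ = (Real.sqrt 2 * Real.sqrt 2)⁻¹ by ring,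
    Real.mul_self_sqrt (by norm_num)]
  norm_num

noncomputable def hadM (x y : Fin d) : Matrix (Fin d) (Fin d) ℂ :=
  fun a b =>
    if a = x then (if b = x then rc else if b = y then rc else 0)
    else if a = y then (if b = x then rc else if b = y then -rc else 0)
    else if b = a then 1 else 0

section HadEntries
variable {x y : Fin d} (hxy : x ≠ y)

lemma Hxx : hadM x y x x = rc := by simp [hadM]
include hxy
lemma Hxy : hadM x y x y = rc := by simp [hadM, hxy.symm]
lemma Hyx : hadM x y y x = rc := by simp [hadM, hxy.symm]
lemma Hyy : hadM x y y y = -rc := by simp [hadM, hxy.symm]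
omit hxy
lemma Hxo (c : Fin d) (h1 : c ≠ x) (h2 : c ≠ y) : hadM x y x c = 0 := by simp [hadM, h1, h2]
lemma Hyo (hxy' : x ≠ y) (c : Fin d) (h1 : c ≠ x) (h2 : c ≠ y) : hadM x y y c = 0 := by
  simp [hadM, hxy'.symm, h1, h2]
lemma Hoo (a c : Fin d) (h1 : a ≠ x) (h2 : a ≠ y) (h3 : c ≠ a) : hadM x y a c = 0 := by
  simp [hadM, h1, h2, h3]
lemma Haa (a : Fin d) (h1 : a ≠ x) (h2 : a ≠ y) : hadM x y a a = 1 := by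
  simp [hadM, h1, h2]
end HadEntries

lemma hadM_mem {x y : Fin d} (hxy : x ≠ y) : hadM x y ∈ Matrix.unitaryGroup (Fin d) ℂ := by
  rw [Matrix.mem_unitaryGroup_iff]
  ext a b
  show (∑ c, hadM x y a c * star (hadM x y b c)) = (1 : Matrix (Fin d) (Fin d) ℂ) a b
  simp only [RCLike.star_def]
  by_cases ha : a = x
  · rw [ha]
    rw [sum_two hxy (fun c hc1 hc2 => by simp [Hxo c hc1 hc2])]
    by_cases hb : b = x
    · rw [hb, Hxx, Hxy hxy, rc_conj, Matrix.one_apply_eq]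
      linear_combination 2 * rc_sq
    · by_cases hb2 : b = y
      · rw [hb2, Hxx, Hxy hxy, Hyx hxy, Hyy hxy, rc_conj, map_neg, rc_conj,
          Matrix.one_apply_ne hxy]
        ring
      · rw [Hxx, Hxy hxy, Hoo b x hb hb2 (fun hh => hb hh.symm),
          Hoo b y hb hb2 (fun hh => hb2 hh.symm), Matrix.one_apply_ne (fun hh => hb hh.symm)]
        simp
  · by_cases ha2 : a = y
    · rw [ha2]
      rw [sum_two hxy (fun c hc1 hc2 => by simp [Hyo hxy c hc1 hc2])]
      by_cases hb : b = x
      · rw [hb, Hyx hxy, Hyy hxy, Hxx, Hxy hxy, rc_conj,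
          Matrix.one_apply_ne (fun hh => hxy hh.symm)]
        ring
      · by_cases hb2 : b = y
        · rw [hb2, Hyx hxy, Hyy hxy, rc_conj, map_neg, rc_conj, Matrix.one_apply_eq]
          linear_combination 2 * rc_sq
        · rw [Hyx hxy, Hyy hxy, Hoo b x hb hb2 (fun hh => hb hh.symm),
            Hoo b y hb hb2 (fun hh => hb2 hh.symm), Matrix.one_apply_ne (fun hh => hb2 hh.symm)]
          simp
    · rw [sum_one (x := a) (fun c hc => by simp [Hoo a c ha ha2 hc])]
      rw [Haa a ha ha2]
      by_cases hb : b = x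
      · rw [hb, Hxo a ha ha2, Matrix.one_apply_ne ha]
        simp
      · by_cases hb2 : b = y
        · rw [hb2, Hyo hxy a ha ha2, Matrix.one_apply_ne ha2]
          simp
        · by_cases hab : a = b
          · rw [← hab, Haa a ha ha2, Matrix.one_apply_eq]
            simp
          · rw [Hoo b a hb hb2 (fun hh : a = b => hab hh), Matrix.one_apply_ne hab]
            simp

lemma hadM_mulVec {x y : Fin d} (hxy : x ≠ y) (w : Fin d → ℂ) :
    (hadM x y).mulVec w = fun a =>
      if a = x then rc * w x + rc * w y
      else if a = y then rc * w x - rc * w y else w a := by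
  funext a
  simp only [Matrix.mulVec, dotProduct]
  by_cases ha : a = x
  · rw [ha, if_pos rfl]
    rw [sum_two hxy (fun c hc1 hc2 => by simp [Hxo c hc1 hc2])]
    rw [Hxx, Hxy hxy]
  · rw [if_neg ha]
    by_cases ha2 : a = y
    · rw [ha2, if_pos rfl]
      rw [sum_two hxy (fun c hc1 hc2 => by simp [Hyo hxy c hc1 hc2])]
      rw [Hyx hxy, Hyy hxy]
      ring
    · rw [if_neg ha2]
      rw [sum_one (x := a) (fun c hc => by simp [Hoo a c ha ha2 hc])]
      rw [Haa a ha ha2, one_mul]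


lemma T_comm12 (e₀ : Fin d → ℂ) (j l k m : Fin d) :
    T μ e₀ j l k m = T μ e₀ l j k m := by
  unfold T
  refine integral_congr_ae (Filter.Eventually.of_forall (fun U => ?_))
  unfold P; ring

lemma T_comm34 (e₀ : Fin d → ℂ) (j l k m : Fin d) :
    T μ e₀ j l k m = T μ e₀ j l m k := by
  unfold T
  refine integral_congr_ae (Filter.Eventually.of_forall (fun U => ?_))
  unfold P; ring

lemma T_had
    (hinv : ∀ V : Matrix.unitaryGroup (Fin d) ℂ, μ.map (fun U => V * U) = μ)
    (e₀ : Fin d → ℂ) (he₀ : star e₀ ⬝ᵥ e₀ = 1) {x y : Fin d} (hxy : x ≠ y) :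
    T μ e₀ x x x x = 2 * T μ e₀ x y x y := by
  set V : Matrix.unitaryGroup (Fin d) ℂ := ⟨hadM x y, hadM_mem hxy⟩ with hV
  have h1 := T_inv μ hinv e₀ V x x x x
  have h2 : ∀ U, P e₀ x x x x (V * U) =
      ∑ a ∈ ({x, y} : Finset (Fin d)), ∑ b ∈ ({x, y} : Finset (Fin d)),
        ∑ c ∈ ({x, y} : Finset (Fin d)), ∑ e ∈ ({x, y} : Finset (Fin d)),
          (4⁻¹ : ℂ) * P e₀ a b c e U := by
    intro U
    have hv : vv e₀ (V * U) x = rc * vv e₀ U x + rc * vv e₀ U y := by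
      rw [vv_mul, hV]
      show ((hadM x y).mulVec (vv e₀ U)) x = _
      rw [hadM_mulVec hxy]
      simp
    simp only [P, hv, Finset.sum_pair hxy]
    set wx := vv e₀ U x
    set wy := vv e₀ U y
    rw [show (starRingEnd ℂ) (rc * wx + rc * wy)
        = rc * (starRingEnd ℂ) wx + rc * (starRingEnd ℂ) wy by
      simp only [map_add, _root_.map_mul, rc_conj]]
    linear_combination (rc * rc + 2⁻¹) * ((wx + wy) * (wx + wy)
      * ((starRingEnd ℂ) wx + (starRingEnd ℂ) wy) * ((starRingEnd ℂ) wx + (starRingEnd ℂ) wy)) * rc_sq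
  have hint : ∀ a b c e : Fin d, Integrable (fun U => (4⁻¹ : ℂ) * P e₀ a b c e U) μ :=
    fun a b c e => (integrable_P μ e₀ he₀ a b c e).const_mul _
  have h3 : T μ e₀ x x x x =
      ∑ a ∈ ({x, y} : Finset (Fin d)), ∑ b ∈ ({x, y} : Finset (Fin d)),
        ∑ c ∈ ({x, y} : Finset (Fin d)), ∑ e ∈ ({x, y} : Finset (Fin d)),
          (4⁻¹ : ℂ) * T μ e₀ a b c e := by
    rw [h1, integral_congr_ae (Filter.Eventually.of_forall h2)]
    rw [integral_finset_sum _ (fun a _ => integrable_finset_sum _ (fun b _ =>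
      integrable_finset_sum _ (fun c _ => integrable_finset_sum _ (fun e _ => hint a b c e))))]
    refine Finset.sum_congr rfl (fun a _ => ?_)
    rw [integral_finset_sum _ (fun b _ =>
      integrable_finset_sum _ (fun c _ => integrable_finset_sum _ (fun e _ => hint a b c e)))]
    refine Finset.sum_congr rfl (fun b _ => ?_)
    rw [integral_finset_sum _ (fun c _ => integrable_finset_sum _ (fun e _ => hint a b c e))]
    refine Finset.sum_congr rfl (fun c _ => ?_)
    rw [integral_finset_sum _ (fun e _ => hint a b c e)]
    refine Finset.sum_congr rfl (fun e _ => ?_)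
    exact MeasureTheory.integral_const_mul _ _
  simp only [Finset.sum_pair hxy] at h3
  have hyx : y ≠ x := hxy.symm
  have z1 : T μ e₀ x x x y = 0 := T_zero μ hinv e₀ (by simp [hxy, hyx])
  have z2 : T μ e₀ x x y x = 0 := T_zero μ hinv e₀ (by simp [hxy, hyx])
  have z3 : T μ e₀ x x y y = 0 := T_zero μ hinv e₀ (by simp [hxy, hyx])
  have z4 : T μ e₀ x y x x = 0 := T_zero μ hinv e₀ (by simp [hxy, hyx])
  have z5 : T μ e₀ x y y y = 0 := T_zero μ hinv e₀ (by simp [hxy, hyx])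
  have z6 : T μ e₀ y x x x = 0 := T_zero μ hinv e₀ (by simp [hxy, hyx])
  have z7 : T μ e₀ y x y y = 0 := T_zero μ hinv e₀ (by simp [hxy, hyx])
  have z8 : T μ e₀ y y x x = 0 := T_zero μ hinv e₀ (by simp [hxy, hyx])
  have z9 : T μ e₀ y y x y = 0 := T_zero μ hinv e₀ (by simp [hxy, hyx])
  have z10 : T μ e₀ y y y x = 0 := T_zero μ hinv e₀ (by simp [hxy, hyx])
  have c1 : T μ e₀ x y y x = T μ e₀ x y x y := T_comm34 μ e₀ x y y x
  have c2 : T μ e₀ y x x y = T μ e₀ x y x y := by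
    rw [T_comm12 μ e₀ y x x y, T_comm34 μ e₀ x y x y]
  have c3 : T μ e₀ y x y x = T μ e₀ x y x y := by
    rw [T_comm12 μ e₀ y x y x, T_comm34 μ e₀ x y y x]
  have c4 : T μ e₀ y y y y = T μ e₀ x x x x := by
    have := T_perm μ hinv e₀ (Equiv.swap x y) y y y y
    simpa [Equiv.swap_apply_right] using this
  rw [z1, z2, z3, z4, z5, z6, z7, z8, z9, z10, c1, c2, c3, c4] at h3
  linear_combination 2 * h3

lemma T_sum (e₀ : Fin d → ℂ) (he₀ : star e₀ ⬝ᵥ e₀ = 1) :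
    ∑ j : Fin d, ∑ m : Fin d, T μ e₀ j m j m = 1 := by
  have hs : ∀ U, ∑ j : Fin d, ∑ m : Fin d, P e₀ j m j m U = 1 := by
    intro U
    have h := vv_norm e₀ he₀ U
    simp only [dotProduct, Pi.star_apply, RCLike.star_def] at h
    calc ∑ j : Fin d, ∑ m : Fin d, P e₀ j m j m U
        = (∑ j : Fin d, (starRingEnd ℂ) (vv e₀ U j) * vv e₀ U j)
          * (∑ m : Fin d, (starRingEnd ℂ) (vv e₀ U m) * vv e₀ U m) := by
          rw [Finset.sum_mul_sum]
          refine Finset.sum_congr rfl (fun j _ => Finset.sum_congr rfl (fun m _ => ?_))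
          unfold P; ring
      _ = 1 := by rw [h]; norm_num
  have hint : ∀ j m : Fin d, Integrable (P e₀ j m j m) μ := fun j m => integrable_P μ e₀ he₀ j m j m
  have : ∑ j : Fin d, ∑ m : Fin d, T μ e₀ j m j m
      = ∫ U, (∑ j : Fin d, ∑ m : Fin d, P e₀ j m j m U) ∂μ := by
    rw [integral_finset_sum _ (fun j _ => integrable_finset_sum _ (fun m _ => hint j m))]
    refine Finset.sum_congr rfl (fun j _ => ?_)
    rw [integral_finset_sum _ (fun m _ => hint j m)]
    rfl
  rw [this, integral_congr_ae (Filter.Eventually.of_forall hs)]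
  simp


end UPovmAux

open UPovmAux in
/-- the mean of the rank-one outcome of the uniform POVM applied to a
state `ρ` is `(I + ρ)/(d+1)`.  Haar measure on the unitary group is encoded as a
left-invariant Borel probability measure `μ` (which is unique on a compact group). -/
theorem uniform_povm_first_moment
    {d : ℕ} (hd : 1 ≤ d)
    [MeasurableSpace (Matrix.unitaryGroup (Fin d) ℂ)]
    [BorelSpace (Matrix.unitaryGroup (Fin d) ℂ)]
    (μ : Measure (Matrix.unitaryGroup (Fin d) ℂ)) [IsProbabilityMeasure μ]
    (hinv : ∀ V : Matrix.unitaryGroup (Fin d) ℂ, μ.map (fun U => V * U) = μ)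
    (ρ : Matrix (Fin d) (Fin d) ℂ) (hρ : ρ.PosSemidef) (hρtr : ρ.trace = 1)
    (e₀ : Fin d → ℂ) (he₀ : star e₀ ⬝ᵥ e₀ = 1) :
    ∀ j k : Fin d,
      (d : ℂ) * ∫ U : Matrix.unitaryGroup (Fin d) ℂ,
          (((U : Matrix (Fin d) (Fin d) ℂ).mulVec e₀ j)
            * (starRingEnd ℂ) ((U : Matrix (Fin d) (Fin d) ℂ).mulVec e₀ k))
          * (star ((U : Matrix (Fin d) (Fin d) ℂ).mulVec e₀)
              ⬝ᵥ ρ.mulVec ((U : Matrix (Fin d) (Fin d) ℂ).mulVec e₀)) ∂μ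
      = ((((d : ℂ) + 1)⁻¹) • (1 + ρ)) j k := by
  intro j k
  -- rewrite the integral as a double sum of fourth-moment integrals
  have hpt : ∀ U : Matrix.unitaryGroup (Fin d) ℂ,
      (((U : Matrix (Fin d) (Fin d) ℂ).mulVec e₀ j)
            * (starRingEnd ℂ) ((U : Matrix (Fin d) (Fin d) ℂ).mulVec e₀ k))
          * (star ((U : Matrix (Fin d) (Fin d) ℂ).mulVec e₀)
              ⬝ᵥ ρ.mulVec ((U : Matrix (Fin d) (Fin d) ℂ).mulVec e₀))
        = ∑ m : Fin d, ∑ l : Fin d, ρ m l * P e₀ j l k m U := by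
    intro U
    simp only [P, vv, dotProduct, Matrix.mulVec, Pi.star_apply, RCLike.star_def]
    rw [Finset.mul_sum]
    refine Finset.sum_congr rfl (fun m _ => ?_)
    rw [Finset.mul_sum, Finset.mul_sum]
    refine Finset.sum_congr rfl (fun l _ => ?_)
    ring
  have hInt : (∫ U : Matrix.unitaryGroup (Fin d) ℂ,
          (((U : Matrix (Fin d) (Fin d) ℂ).mulVec e₀ j)
            * (starRingEnd ℂ) ((U : Matrix (Fin d) (Fin d) ℂ).mulVec e₀ k))
          * (star ((U : Matrix (Fin d) (Fin d) ℂ).mulVec e₀)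
              ⬝ᵥ ρ.mulVec ((U : Matrix (Fin d) (Fin d) ℂ).mulVec e₀)) ∂μ)
      = ∑ m : Fin d, ∑ l : Fin d, ρ m l * T μ e₀ j l k m := by
    rw [integral_congr_ae (Filter.Eventually.of_forall hpt)]
    rw [integral_finset_sum _ (fun m _ => integrable_finset_sum _
      (fun l _ => (integrable_P μ e₀ he₀ j l k m).const_mul (ρ m l)))]
    refine Finset.sum_congr rfl (fun m _ => ?_)
    rw [integral_finset_sum _ (fun l _ => (integrable_P μ e₀ he₀ j l k m).const_mul (ρ m l))]
    refine Finset.sum_congr rfl (fun l _ => ?_)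
    exact MeasureTheory.integral_const_mul _ _
  rw [hInt]
  rcases Nat.lt_or_ge d 2 with hd2 | hd2
  · -- d = 1
    interval_cases d
    have hjk : j = k := Subsingleton.elim j k
    have hj0 : j = 0 := Subsingleton.elim j 0
    have hρ11 : ρ 0 0 = 1 := by
      rw [← hρtr]
      simp [Matrix.trace, Matrix.diag]
    have hT : T μ e₀ 0 0 0 0 = 1 := by
      have := T_sum μ e₀ he₀
      simpa using this
    subst hjk hj0
    simp only [Fin.sum_univ_one, hρ11, hT]
    norm_num
    rw [hρ11]
    norm_num
  · -- d ≥ 2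
    have h0d : (0 : ℕ) < d := by omega
    have h1d : (1 : ℕ) < d := by omega
    set i0 : Fin d := ⟨0, h0d⟩ with hi0
    set i1 : Fin d := ⟨1, h1d⟩ with hi1
    have h01 : i0 ≠ i1 := by simp [hi0, hi1, Fin.ext_iff]
    set β : ℂ := T μ e₀ i0 i1 i0 i1 with hβdef
    have hTdiag : ∀ p q : Fin d, p ≠ q → T μ e₀ p q p q = β := by
      intro p q hpq
      set l' : Fin d := (Equiv.swap p i0) q with hl'def
      have hl' : l' ≠ i0 := by
        rw [hl'def]
        intro hh
        rw [Equiv.swap_apply_eq_iff, Equiv.swap_apply_right] at hh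
        exact hpq hh.symm
      set σ : Equiv.Perm (Fin d) := (Equiv.swap p i0).trans (Equiv.swap l' i1) with hσdef
      have hσp : σ p = i0 := by
        rw [hσdef]
        simp only [Equiv.trans_apply, Equiv.swap_apply_left]
        exact Equiv.swap_apply_of_ne_of_ne (fun hh => hl' hh.symm) h01
      have hσq : σ q = i1 := by
        rw [hσdef]
        simp only [Equiv.trans_apply, ← hl'def]
        exact Equiv.swap_apply_left l' i1
      have hperm := T_perm μ hinv e₀ σ p q p q
      rw [hσp, hσq] at hperm
      exact hperm
    have hTα : ∀ p : Fin d, T μ e₀ p p p p = 2 * β := by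
      intro p
      have hperm := T_perm μ hinv e₀ (Equiv.swap p i0) p p p p
      rw [Equiv.swap_apply_left] at hperm
      rw [hperm, hβdef]
      exact T_had μ hinv e₀ he₀ h01
    have hTall : ∀ p q : Fin d, T μ e₀ p q p q = β + (if q = p then β else 0) := by
      intro p q
      by_cases h : q = p
      · subst h
        rw [hTα q, if_pos rfl]
        ring
      · rw [hTdiag p q (fun hh => h hh.symm), if_neg h]
        ring
    have hβ : (d : ℂ) * (d : ℂ) * β + (d : ℂ) * β = 1 := by
      have hsum := T_sum μ e₀ he₀
      rw [Finset.sum_congr rfl (fun p _ => Finset.sum_congr rfl (fun q _ => hTall p q))] at hsum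
      simp only [Finset.sum_add_distrib, Finset.sum_ite_eq', Finset.mem_univ, if_pos,
        Finset.sum_const, Finset.card_univ, Fintype.card_fin, nsmul_eq_mul] at hsum
      rw [← hsum]
      ring
    have hdne : (d : ℂ) + 1 ≠ 0 := by
      have : ((d + 1 : ℕ) : ℂ) ≠ 0 := Nat.cast_ne_zero.mpr (by omega)
      push_cast at this
      exact this
    by_cases hjk : j = k
    · subst hjk
      have hin : ∀ m : Fin d, ∑ l : Fin d, ρ m l * T μ e₀ j l j m = ρ m m * T μ e₀ j m j m := by
        intro m
        refine Finset.sum_eq_single m (fun l _ hlm => ?_) (fun h => absurd (Finset.mem_univ m) h)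
        rw [T_zero μ hinv e₀ ?_, mul_zero]
        rintro (⟨-, h⟩ | ⟨h1, h2⟩)
        · exact hlm h
        · exact hlm (h2.trans h1)
      rw [Finset.sum_congr rfl (fun m _ => hin m)]
      rw [Finset.sum_congr rfl (fun m _ => by rw [hTall j m])]
      have htr : ∑ m : Fin d, ρ m m = 1 := by
        rw [← hρtr]; rfl
      have hexp : ∑ m : Fin d, ρ m m * (β + if m = j then β else 0)
          = β * (1 + ρ j j) := by
        have hsplit : ∑ m : Fin d, ρ m m * (β + if m = j then β else 0)
            = (∑ m : Fin d, ρ m m * β) + ∑ m : Fin d, (if m = j then ρ m m * β else 0) := by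
          rw [← Finset.sum_add_distrib]
          refine Finset.sum_congr rfl (fun m _ => ?_)
          by_cases h : m = j <;> simp [h] <;> ring
        rw [hsplit, ← Finset.sum_mul, htr, Finset.sum_ite_eq' Finset.univ j
          (fun m => ρ m m * β)]
        simp
        ring
      rw [hexp, Matrix.smul_apply, Matrix.add_apply, Matrix.one_apply_eq,
        smul_eq_mul, inv_mul_eq_div, eq_div_iff hdne]
      linear_combination (1 + ρ j j) * hβ
    · have hzero : ∀ m : Fin d, m ≠ j → ∑ l : Fin d, ρ m l * T μ e₀ j l k m = 0 := by
        intro m hmj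
        refine Finset.sum_eq_zero (fun l _ => ?_)
        rw [T_zero μ hinv e₀ ?_, mul_zero]
        rintro (⟨h1, -⟩ | ⟨h1, -⟩)
        · exact hjk h1
        · exact hmj h1.symm
      have hjterm : ∑ l : Fin d, ρ j l * T μ e₀ j l k j = ρ j k * T μ e₀ j k k j := by
        refine Finset.sum_eq_single k (fun l _ hlk => ?_)
          (fun h => absurd (Finset.mem_univ k) h)
        rw [T_zero μ hinv e₀ ?_, mul_zero]
        rintro (⟨h1, -⟩ | ⟨-, h2⟩)
        · exact hjk h1
        · exact hlk h2
      rw [Finset.sum_eq_single j (fun m _ hmj => hzero m hmj)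
        (fun h => absurd (Finset.mem_univ j) h), hjterm]
      have hT : T μ e₀ j k k j = β := by
        rw [T_comm34 μ e₀ j k k j]
        exact hTdiag j k hjk
      rw [hT, Matrix.smul_apply, Matrix.add_apply, Matrix.one_apply_ne hjk,
        smul_eq_mul, inv_mul_eq_div, eq_div_iff hdne]
      linear_combination ρ j k * hβ
end

section
/- Let ρ be a density matrix on ℂ^d, let I denote the d×d identity, let ⊗ be the Kronecker product, and let F be the d²×d² swap matrix determined by F(a ⊗ b) = b ⊗ a for all a, b ∈ ℂ^d. Then the matrix (I⊗I + F)·(I⊗I + I⊗ρ + ρ⊗I) is Hermitian, positive semidefinite, and bounded above by 6·(I⊗I) in the Loewner (positive semidefinite) order. -/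
open Matrix
open scoped ComplexOrder Kronecker

private lemma aux_smul_psd {n : Type*} [Fintype n] {A : Matrix n n ℂ} {c : ℂ} (hc : 0 ≤ c)
    (hA : A.PosSemidef) : (c • A).PosSemidef := by
  refine ⟨?_, fun x => ?_⟩
  · unfold Matrix.IsHermitian
    rw [conjTranspose_smul, hA.1, (IsSelfAdjoint.of_nonneg hc).star_eq]
  · exact (hA.smul hc).2 x

private lemma aux_kron_psd {m n : Type*} [Fintype m] [Fintype n] [DecidableEq m] [DecidableEq n]
    {A : Matrix m m ℂ} {B : Matrix n n ℂ} (hA : A.PosSemidef) (hB : B.PosSemidef) :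
    (A ⊗ₖ B).PosSemidef := by
  exact hA.kronecker hB

private lemma aux_one_sub_psd {d : ℕ} {ρ : Matrix (Fin d) (Fin d) ℂ} (hρ : ρ.PosSemidef)
    (htr : ρ.trace = 1) : (1 - ρ).PosSemidef := by
  have hH := hρ.1
  set U : Matrix (Fin d) (Fin d) ℂ := (hH.eigenvectorUnitary : Matrix (Fin d) (Fin d) ℂ) with hUdef
  have hU : U * star U = 1 := mem_unitaryGroup_iff.mp hH.eigenvectorUnitary.2
  have hU' : star U * U = 1 := mem_unitaryGroup_iff'.mp hH.eigenvectorUnitary.2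
  have hspec : ρ = U * diagonal (RCLike.ofReal ∘ hH.eigenvalues) * star U := hH.spectral_theorem
  have htr2 : ∑ i, hH.eigenvalues i = 1 := by
    have h1 : ρ.trace = ∑ i, (hH.eigenvalues i : ℂ) := by
      rw [congrArg Matrix.trace hspec, trace_mul_cycle, hU', one_mul, trace_diagonal]
      simp
    rw [htr] at h1
    exact_mod_cast h1.symm
  have hle : ∀ i, hH.eigenvalues i ≤ 1 := by
    intro i
    rw [← htr2]
    exact Finset.single_le_sum (fun j _ => hρ.eigenvalues_nonneg j) (Finset.mem_univ i)
  have key : 1 - ρ = U * diagonal (fun i => ((1 - hH.eigenvalues i : ℝ) : ℂ)) * Uᴴ := by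
    rw [← Matrix.star_eq_conjTranspose]
    have h2 : diagonal (fun i => ((1 - hH.eigenvalues i : ℝ) : ℂ))
        = 1 - diagonal (RCLike.ofReal ∘ hH.eigenvalues) := by
      rw [← diagonal_one, diagonal_sub]
      funext i; push_cast; simp
    rw [h2, mul_sub, sub_mul, mul_one, hU, ← hspec]
  rw [key]
  refine PosSemidef.mul_mul_conjTranspose_same ?_ U
  refine posSemidef_diagonal_iff.mpr fun i => ?_
  have h3 : (0:ℝ) ≤ 1 - hH.eigenvalues i := by linarith [hle i]
  exact_mod_cast h3

/-- for a density matrix `ρ`, the matrix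
`(I⊗I + F)(I⊗I + I⊗ρ + ρ⊗I)` is Hermitian, positive semidefinite, and at most
`6·(I⊗I)` in the Loewner order, where `F` is the swap matrix. -/
theorem second_moment_matrix_bounds
    {d : ℕ} (ρ : Matrix (Fin d) (Fin d) ℂ) (hρ : ρ.PosSemidef) (hρtr : ρ.trace = 1)
    (F : Matrix (Fin d × Fin d) (Fin d × Fin d) ℂ)
    (hF : ∀ a b : Fin d → ℂ,
      F.mulVec (fun p => a p.1 * b p.2) = fun p => b p.1 * a p.2) :
    (((1 : Matrix (Fin d) (Fin d) ℂ) ⊗ₖ (1 : Matrix (Fin d) (Fin d) ℂ) + F) *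
        ((1 : Matrix (Fin d) (Fin d) ℂ) ⊗ₖ (1 : Matrix (Fin d) (Fin d) ℂ)
          + (1 : Matrix (Fin d) (Fin d) ℂ) ⊗ₖ ρ
          + ρ ⊗ₖ (1 : Matrix (Fin d) (Fin d) ℂ))).IsHermitian
    ∧ (((1 : Matrix (Fin d) (Fin d) ℂ) ⊗ₖ (1 : Matrix (Fin d) (Fin d) ℂ) + F) *
        ((1 : Matrix (Fin d) (Fin d) ℂ) ⊗ₖ (1 : Matrix (Fin d) (Fin d) ℂ)
          + (1 : Matrix (Fin d) (Fin d) ℂ) ⊗ₖ ρ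
          + ρ ⊗ₖ (1 : Matrix (Fin d) (Fin d) ℂ))).PosSemidef
    ∧ ((6 : ℂ) • ((1 : Matrix (Fin d) (Fin d) ℂ) ⊗ₖ (1 : Matrix (Fin d) (Fin d) ℂ))
        - ((1 : Matrix (Fin d) (Fin d) ℂ) ⊗ₖ (1 : Matrix (Fin d) (Fin d) ℂ) + F) *
          ((1 : Matrix (Fin d) (Fin d) ℂ) ⊗ₖ (1 : Matrix (Fin d) (Fin d) ℂ)
            + (1 : Matrix (Fin d) (Fin d) ℂ) ⊗ₖ ρ
            + ρ ⊗ₖ (1 : Matrix (Fin d) (Fin d) ℂ))).PosSemidef := by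
  -- entrywise description of the swap matrix
  have hFe : ∀ p q : Fin d × Fin d, F p q = if p = (q.2, q.1) then 1 else 0 := by
    intro p q
    have h := congrFun (hF (Pi.single q.1 1) (Pi.single q.2 1)) p
    simp only [mulVec, dotProduct, Pi.single_apply] at h
    have h2 : ∀ r : Fin d × Fin d,
        F p r * ((if r.1 = q.1 then (1:ℂ) else 0) * (if r.2 = q.2 then 1 else 0))
        = if r = q then F p r else 0 := by
      intro r
      rcases r with ⟨r1, r2⟩
      by_cases h1 : r1 = q.1 <;> by_cases h2 : r2 = q.2 <;>
        simp [h1, h2, Prod.ext_iff, eq_comm]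
    rw [Finset.sum_congr rfl (fun r _ => h2 r), Finset.sum_ite_eq' Finset.univ] at h
    simp only [Finset.mem_univ, if_true] at h
    rw [h]
    rcases p with ⟨p1, p2⟩
    by_cases h1 : p1 = q.2 <;> by_cases h2 : p2 = q.1 <;> simp [h1, h2, Prod.ext_iff, eq_comm]
  have hFe' : ∀ p q : Fin d × Fin d, F p q = if q = (p.2, p.1) then 1 else 0 := by
    intro p q
    rw [hFe]
    rcases p with ⟨p1,p2⟩; rcases q with ⟨q1,q2⟩
    simp only [Prod.mk.injEq]
    by_cases h1 : p1 = q2 <;> by_cases h2 : p2 = q1 <;> simp [h1, h2, eq_comm]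
  have hFmul : ∀ A : Matrix (Fin d × Fin d) (Fin d × Fin d) ℂ,
      F * A = A.submatrix Prod.swap id := by
    intro A
    ext p r
    rw [mul_apply]
    simp only [hFe', ite_mul, one_mul, zero_mul]
    rw [Finset.sum_ite_eq' Finset.univ]
    simp [Prod.swap]
  have hmulF : ∀ A : Matrix (Fin d × Fin d) (Fin d × Fin d) ℂ,
      A * F = A.submatrix id Prod.swap := by
    intro A
    ext p r
    rw [mul_apply]
    simp only [hFe, mul_ite, mul_one, mul_zero]
    rw [Finset.sum_ite_eq' Finset.univ]
    simp [Prod.swap]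
  have hFF : F * F = 1 := by
    rw [hFmul]
    ext p q
    rcases p with ⟨p1,p2⟩
    simp [submatrix_apply, hFe', one_apply, Prod.ext_iff, eq_comm, and_comm]
  have hFH : F.IsHermitian := by
    show Fᴴ = F
    ext p q
    rw [conjTranspose_apply, hFe' q p, hFe p q, apply_ite star]
    simp
  have hc1 : F * ((1 : Matrix (Fin d) (Fin d) ℂ) ⊗ₖ ρ) = (ρ ⊗ₖ 1) * F := by
    rw [hFmul, hmulF]
    ext p q
    rcases p with ⟨p1,p2⟩; rcases q with ⟨q1,q2⟩
    by_cases h : p2 = q1 <;> simp [submatrix_apply, kroneckerMap_apply, one_apply, h, Prod.swap]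
  have hc2 : F * (ρ ⊗ₖ (1 : Matrix (Fin d) (Fin d) ℂ))
      = ((1 : Matrix (Fin d) (Fin d) ℂ) ⊗ₖ ρ) * F := by
    rw [hFmul, hmulF]
    ext p q
    rcases p with ⟨p1,p2⟩; rcases q with ⟨q1,q2⟩
    by_cases h : p1 = q2 <;> simp [submatrix_apply, kroneckerMap_apply, one_apply, h, Prod.swap]
  simp only [one_kronecker_one]
  set A : Matrix (Fin d × Fin d) (Fin d × Fin d) ℂ := (1 : Matrix (Fin d) (Fin d) ℂ) ⊗ₖ ρ with hAdef
  set B : Matrix (Fin d × Fin d) (Fin d × Fin d) ℂ := ρ ⊗ₖ (1 : Matrix (Fin d) (Fin d) ℂ) with hBdef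
  set S : Matrix (Fin d × Fin d) (Fin d × Fin d) ℂ := 1 + F with hSdef
  set M : Matrix (Fin d × Fin d) (Fin d × Fin d) ℂ := 1 + A + B with hMdef
  have hApsd : A.PosSemidef := aux_kron_psd .one hρ
  have hBpsd : B.PosSemidef := aux_kron_psd hρ .one
  have hM : M.PosSemidef := (Matrix.PosSemidef.one.add hApsd).add hBpsd
  have hSH : S.IsHermitian := by
    show Sᴴ = S
    rw [hSdef, conjTranspose_add, conjTranspose_one, hFH.eq]
  have hSM : S * M = M * S := by
    rw [hSdef, hMdef]
    simp only [mul_add, add_mul, one_mul, mul_one, hc1, hc2]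
    abel
  have hSS : S * S = S + S := by
    rw [hSdef]
    simp only [mul_add, add_mul, one_mul, mul_one, hFF]
    abel
  have halfId : ∀ X : Matrix (Fin d × Fin d) (Fin d × Fin d) ℂ, (1/2 : ℂ) • (X + X) = X := by
    intro X
    rw [smul_add, ← add_smul]
    norm_num
  have key : ∀ N : Matrix (Fin d × Fin d) (Fin d × Fin d) ℂ,
      N.PosSemidef → S * N = N * S → (S * N).PosSemidef := by
    intro N hN hcomm
    have h1 : S * N * S = S * N + S * N := by
      rw [mul_assoc, ← hcomm, ← mul_assoc, hSS, add_mul]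
    have h2 := hN.mul_mul_conjTranspose_same S
    rw [hSH.eq, h1] at h2
    rw [← halfId (S * N)]
    exact aux_smul_psd (by rw [Complex.le_def]; norm_num) h2
  refine ⟨?_, key M hM hSM, ?_⟩
  · show (S * M)ᴴ = S * M
    rw [conjTranspose_mul, hM.1.eq, hSH.eq, ← hSM]
  · have h1ρ : ((1 : Matrix (Fin d) (Fin d) ℂ) - ρ).PosSemidef := aux_one_sub_psd hρ hρtr
    have hN : ((3:ℂ) • (1 : Matrix (Fin d × Fin d) (Fin d × Fin d) ℂ) - M).PosSemidef := by
      have k1 : (1 : Matrix (Fin d) (Fin d) ℂ) ⊗ₖ ((1 : Matrix (Fin d) (Fin d) ℂ) - ρ)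
          = 1 - A := by
        rw [hAdef]
        ext p q
        rcases p with ⟨p1,p2⟩; rcases q with ⟨q1,q2⟩
        by_cases h1 : p1 = q1 <;> by_cases h2 : p2 = q2 <;>
          simp [kroneckerMap_apply, one_apply, Matrix.sub_apply, h1, h2, Prod.ext_iff]
      have k2 : ((1 : Matrix (Fin d) (Fin d) ℂ) - ρ) ⊗ₖ (1 : Matrix (Fin d) (Fin d) ℂ)
          = 1 - B := by
        rw [hBdef]
        ext p q
        rcases p with ⟨p1,p2⟩; rcases q with ⟨q1,q2⟩
        by_cases h1 : p1 = q1 <;> by_cases h2 : p2 = q2 <;>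
          simp [kroneckerMap_apply, one_apply, Matrix.sub_apply, h1, h2, Prod.ext_iff]
      have e : (3:ℂ) • (1 : Matrix (Fin d × Fin d) (Fin d × Fin d) ℂ) - M
          = (1 : Matrix (Fin d) (Fin d) ℂ) ⊗ₖ ((1 : Matrix (Fin d) (Fin d) ℂ) - ρ)
            + ((1 : Matrix (Fin d) (Fin d) ℂ) - ρ) ⊗ₖ (1 : Matrix (Fin d) (Fin d) ℂ) := by
        rw [k1, k2, hMdef, show (3:ℂ) = 1 + 1 + 1 by norm_num, add_smul, add_smul, one_smul]
        abel
      rw [e]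
      exact (aux_kron_psd .one h1ρ).add (aux_kron_psd h1ρ .one)
    have hcommN : S * ((3:ℂ) • 1 - M) = ((3:ℂ) • 1 - M) * S := by
      rw [mul_sub, sub_mul, hSM, mul_smul_comm, smul_mul_assoc, mul_one, one_mul]
    have hSN := key _ hN hcommN
    have hX : ((1 : Matrix (Fin d × Fin d) (Fin d × Fin d) ℂ) - F).PosSemidef := by
      have hXc : ((1 : Matrix (Fin d × Fin d) (Fin d × Fin d) ℂ) - F)ᴴ = 1 - F := by
        rw [conjTranspose_sub, conjTranspose_one, hFH.eq]
      have hXX : ((1 : Matrix (Fin d × Fin d) (Fin d × Fin d) ℂ) - F) * (1 - F)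
          = (1 - F) + (1 - F) := by
        simp only [mul_sub, sub_mul, one_mul, mul_one, hFF]
        abel
      have h2 := posSemidef_self_mul_conjTranspose
        ((1 : Matrix (Fin d × Fin d) (Fin d × Fin d) ℂ) - F)
      rw [hXc, hXX] at h2
      rw [← halfId (1 - F)]
      exact aux_smul_psd (by rw [Complex.le_def]; norm_num) h2
    have hdec : (6:ℂ) • (1 : Matrix (Fin d × Fin d) (Fin d × Fin d) ℂ) - S * M
        = (3:ℂ) • ((1 : Matrix (Fin d × Fin d) (Fin d × Fin d) ℂ) - F)
          + S * ((3:ℂ) • 1 - M) := by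
      rw [mul_sub, mul_smul_comm, mul_one, smul_sub, hSdef, smul_add,
        show (6:ℂ) • (1 : Matrix (Fin d × Fin d) (Fin d × Fin d) ℂ)
          = (3:ℂ) • (1 : Matrix (Fin d × Fin d) (Fin d × Fin d) ℂ) + (3:ℂ) • 1 by
            rw [← add_smul]; norm_num]
      abel
    rw [hdec]
    exact (aux_smul_psd (by rw [Complex.le_def]; norm_num) hX).add hSN
end
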